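/- arXiv:1110.4260 — 2 statements merged into one kernel-verified Lean document; each statement's English description precedes it below -/
import Mathlib

section
/- Suppose vectors α₁, α₂, β₁,…,β₇ in a Euclidean space are such that both {α₁, β₁,…,β₇} and {α₂, β₁,…,β₇} are orthogonal sets with all square norms equal to 1/8, and all sums α_i + ∑_{j=1}^7 ε_j β_j (ε ∈ {±1}⁷, i = 1,2) lie in a common root system whose roots have pairwise inner products in {0, ±1/2} when of norm 1. If a := ⟨α₁, α₂⟩ satisfies a + 7/8, a + 3/8, a − 1/8 ∈ {0, ±1/2}, then a = −3/8, and hence ‖α₁ + α₂‖² = −1/2 < 0, a contradiction; therefore such α₁ ≠ ±α₂ cannot exist. -/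
open RealInnerProductSpace

variable {V : Type*} [NormedAddCommGroup V] [InnerProductSpace ℝ V]

/-- A root system in a Euclidean space, without the spanning condition. -/
def IsRootSet (R : Set V) : Prop :=
  R.Finite ∧ (0 : V) ∉ R ∧
  (∀ α ∈ R, ∀ t : ℝ, t • α ∈ R → t = 1 ∨ t = -1) ∧
  (∀ α ∈ R, ∀ β ∈ R, ∃ n : ℤ, 2 * ⟪α, β⟫ / ⟪α, α⟫ = (n : ℝ)) ∧
  (∀ α ∈ R, ∀ v ∈ R, v - (2 * ⟪α, v⟫ / ⟪α, α⟫) • α ∈ R)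

/-- A root system: a finite spanning set, not containing `0`, with `±α` the only
multiples of each root, satisfying integrality and closed under reflections. -/
def IsRootSystem (R : Set V) : Prop :=
  IsRootSet R ∧ Submodule.span ℝ R = ⊤

/-- A subsystem of roots: a set spanning `V` contained in some root system of `V`. -/
def IsSubsystem (P : Set V) : Prop :=
  Submodule.span ℝ P = ⊤ ∧ ∃ R : Set V, IsRootSystem R ∧ P ⊆ R

/-- The reflection closure of `P`: the minimal set containing `P` and closed under
the reflections `s_α` for `α` in it, i.e. the minimal root system `P̄` containing `P`. -/
inductive ReflClosure (P : Set V) : V → Prop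
  | base : ∀ v ∈ P, ReflClosure P v
  | refl : ∀ α v, ReflClosure P α → ReflClosure P v →
      ReflClosure P (v - (2 * ⟪α, v⟫ / ⟪α, α⟫) • α)

/-- `P` is admissible if it is a subsystem of roots and `P̄ \ P` is a root system
(in the subspace it spans). -/
def IsAdmissible (P : Set V) : Prop :=
  IsSubsystem P ∧ IsRootSet ({v | ReflClosure P v} \ P)


private lemma aux_inner_comb (β : Fin 7 → V)
    (hβorth : ∀ i j, i ≠ j → ⟪β i, β j⟫ = 0) (hβnorm : ∀ i, ⟪β i, β i⟫ = 1/8)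
    (x y : V) (hx : ∀ j, ⟪x, β j⟫ = 0) (hy : ∀ j, ⟪y, β j⟫ = 0) (ε ε' : Fin 7 → ℝ) :
    ⟪x + ∑ j, ε j • β j, y + ∑ j, ε' j • β j⟫ = ⟪x, y⟫ + (∑ j, ε j * ε' j) / 8 := by
  have hy' : ∀ j, ⟪β j, y⟫ = 0 := fun j => by rw [real_inner_comm]; exact hy j
  have h1 : ⟪x, ∑ j, ε' j • β j⟫ = 0 := by simp [inner_sum, real_inner_smul_right, hx]
  have h2 : ⟪∑ j, ε j • β j, y⟫ = 0 := by simp [sum_inner, real_inner_smul_left, hy']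
  have h3 : ⟪∑ j, ε j • β j, ∑ j, ε' j • β j⟫ = ∑ j, ε j * ε' j * (1/8) := by
    rw [sum_inner]
    refine Finset.sum_congr rfl fun j _ => ?_
    rw [real_inner_smul_left, inner_sum]
    simp only [real_inner_smul_right]
    rw [Finset.sum_eq_single j (fun k _ hk => by rw [hβorth j k (Ne.symm hk)]; ring)
      (by simp)]
    rw [hβnorm]; ring
  have h4 : ∑ j, ε j * ε' j * (1/8) = (∑ j, ε j * ε' j) / 8 := by
    rw [Finset.sum_div]
    exact Finset.sum_congr rfl fun j _ => by ring
  rw [inner_add_left, inner_add_right, inner_add_right, h1, h2, h3, h4]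
  ring

private lemma aux_inner_beta (β : Fin 7 → V)
    (hβorth : ∀ i j, i ≠ j → ⟪β i, β j⟫ = 0) (hβnorm : ∀ i, ⟪β i, β i⟫ = 1/8)
    (x : V) (hx : ∀ j, ⟪x, β j⟫ = 0) (ε : Fin 7 → ℝ) (j : Fin 7) :
    ⟪x + ∑ k, ε k • β k, β j⟫ = ε j * (1/8) := by
  rw [inner_add_left, hx, sum_inner, zero_add]
  simp only [real_inner_smul_left]
  rw [Finset.sum_eq_single j (fun k _ hk => by rw [hβorth k j hk]; ring) (by simp)]
  rw [hβnorm]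

/-- The key contradiction excluding rank `14`: if `{α₁, β₁,…,β₇}` and `{α₂, β₁,…,β₇}`
are orthogonal sets of square norm `1/8`, all vectors `αᵢ + ∑ εⱼβⱼ` lie in a common root
system `R` whose distinct non-opposite norm-one roots have inner products in `{0, ±1/2}`,
and `α₁ ≠ ±α₂`, then (since necessarily `⟨α₁,α₂⟩ = -3/8`, giving `‖α₁+α₂‖² = -1/2 < 0`)
we get a contradiction: such vectors cannot exist. -/
theorem stmt_17 (α₁ α₂ : V) (β : Fin 7 → V)
    (hβorth : ∀ i j, i ≠ j → ⟪β i, β j⟫ = 0) (hβnorm : ∀ i, ⟪β i, β i⟫ = 1/8)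
    (hαβ₁ : ∀ j, ⟪α₁, β j⟫ = 0) (hαβ₂ : ∀ j, ⟪α₂, β j⟫ = 0)
    (hα₁ : ⟪α₁, α₁⟫ = 1/8) (hα₂ : ⟪α₂, α₂⟫ = 1/8)
    (R : Set V) (hR : IsRootSystem R)
    (hmem : ∀ (i : Fin 2) (ε : Fin 7 → ℝ), (∀ j, ε j = 1 ∨ ε j = -1) →
      (if i = 0 then α₁ else α₂) + ∑ j, ε j • β j ∈ R)
    (hprod : ∀ v ∈ R, ∀ w ∈ R, ‖v‖ = 1 → ‖w‖ = 1 → v ≠ w → v ≠ -w →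
      ⟪v, w⟫ ∈ ({0, 1/2, -1/2} : Set ℝ))
    (hne : α₁ ≠ α₂) (hne' : α₁ ≠ -α₂) : False := by
  classical
  -- the three sign patterns
  set ε₀ : Fin 7 → ℝ := fun _ => 1 with hε₀
  set ε₂ : Fin 7 → ℝ := fun j => if j.val < 2 then -1 else 1 with hε₂
  set ε₄ : Fin 7 → ℝ := fun j => if j.val < 4 then -1 else 1 with hε₄
  have pm₀ : ∀ j, ε₀ j = 1 ∨ ε₀ j = -1 := fun j => Or.inl rfl
  have pm₂ : ∀ j, ε₂ j = 1 ∨ ε₂ j = -1 := fun j => by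
    by_cases h : j.val < 2 <;> simp only [hε₂, h, if_true, if_false] <;> norm_num
  have pm₄ : ∀ j, ε₄ j = 1 ∨ ε₄ j = -1 := fun j => by
    by_cases h : j.val < 4 <;> simp [hε₄, h]
  set v : V := α₁ + ∑ j, ε₀ j • β j with hv
  set w₀ : V := α₂ + ∑ j, ε₀ j • β j with hw₀
  set w₂ : V := α₂ + ∑ j, ε₂ j • β j with hw₂
  set w₄ : V := α₂ + ∑ j, ε₄ j • β j with hw₄
  have hvR : v ∈ R := by simpa using hmem 0 ε₀ pm₀
  have hw₀R : w₀ ∈ R := by simpa using hmem 1 ε₀ pm₀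
  have hw₂R : w₂ ∈ R := by simpa using hmem 1 ε₂ pm₂
  have hw₄R : w₄ ∈ R := by simpa using hmem 1 ε₄ pm₄
  -- norms
  have hnorm : ∀ (x : V), ⟪x, β 0⟫ = 0 → (∀ ε : Fin 7 → ℝ, (∀ j, ε j = 1 ∨ ε j = -1) → True) → True := fun _ _ _ => trivial
  have norm_one : ∀ (x : V), ⟪x, x⟫ = 1/8 → (∀ j, ⟪x, β j⟫ = 0) →
      ∀ ε : Fin 7 → ℝ, (∀ j, ε j = 1 ∨ ε j = -1) → ‖x + ∑ j, ε j • β j‖ = 1 := by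
    intro x hxx hxβ ε hpm
    have h := aux_inner_comb β hβorth hβnorm x x hxβ hxβ ε ε
    have hs : ∑ j, ε j * ε j = 7 := by
      have : ∀ j, ε j * ε j = 1 := fun j => by rcases hpm j with h' | h' <;> rw [h'] <;> norm_num
      simp [this]
    rw [hxx, hs] at h
    have h2 : ⟪x + ∑ j, ε j • β j, x + ∑ j, ε j • β j⟫ = 1 := by rw [h]; norm_num
    rw [real_inner_self_eq_norm_sq] at h2
    nlinarith [norm_nonneg (x + ∑ j, ε j • β j)]
  have hnv : ‖v‖ = 1 := norm_one α₁ hα₁ hαβ₁ ε₀ pm₀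
  have hnw₀ : ‖w₀‖ = 1 := norm_one α₂ hα₂ hαβ₂ ε₀ pm₀
  have hnw₂ : ‖w₂‖ = 1 := norm_one α₂ hα₂ hαβ₂ ε₂ pm₂
  have hnw₄ : ‖w₄‖ = 1 := norm_one α₂ hα₂ hαβ₂ ε₄ pm₄
  -- distinctness via inner products with β 0 and β 6
  have ivβ : ∀ j, ⟪v, β j⟫ = ε₀ j * (1/8) := aux_inner_beta β hβorth hβnorm α₁ hαβ₁ ε₀
  have iw₂β : ∀ j, ⟪w₂, β j⟫ = ε₂ j * (1/8) := aux_inner_beta β hβorth hβnorm α₂ hαβ₂ ε₂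
  have iw₄β : ∀ j, ⟪w₄, β j⟫ = ε₄ j * (1/8) := aux_inner_beta β hβorth hβnorm α₂ hαβ₂ ε₄
  have iw₀β : ∀ j, ⟪w₀, β j⟫ = ε₀ j * (1/8) := aux_inner_beta β hβorth hβnorm α₂ hαβ₂ ε₀
  have hvw₀ : v ≠ w₀ := fun h => hne (by rwa [hv, hw₀, add_left_inj] at h)
  have hvw₀' : v ≠ -w₀ := by
    intro h
    have := congrArg (fun z => ⟪z, β 0⟫) h
    simp only [inner_neg_left, iw₀β, ivβ] at this
    simp [hε₀] at this
    norm_num at this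
  have hvw₂ : v ≠ w₂ := by
    intro h
    have := congrArg (fun z => ⟪z, β 0⟫) h
    simp only [ivβ, iw₂β] at this
    norm_num [hε₀, hε₂, Fin.val_zero, Fin.val_one, show ((2:Fin 7):ℕ) = 2 from rfl, show ((3:Fin 7):ℕ) = 3 from rfl, show ((4:Fin 7):ℕ) = 4 from rfl, show ((5:Fin 7):ℕ) = 5 from rfl, show ((6:Fin 7):ℕ) = 6 from rfl] at this
  have hvw₂' : v ≠ -w₂ := by
    intro h
    have := congrArg (fun z => ⟪z, β 6⟫) h
    simp only [inner_neg_left, ivβ, iw₂β] at this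
    norm_num [hε₀, hε₂, Fin.val_zero, Fin.val_one, show ((2:Fin 7):ℕ) = 2 from rfl, show ((3:Fin 7):ℕ) = 3 from rfl, show ((4:Fin 7):ℕ) = 4 from rfl, show ((5:Fin 7):ℕ) = 5 from rfl, show ((6:Fin 7):ℕ) = 6 from rfl] at this
  have hvw₄ : v ≠ w₄ := by
    intro h
    have := congrArg (fun z => ⟪z, β 0⟫) h
    simp only [ivβ, iw₄β] at this
    norm_num [hε₀, hε₄, Fin.val_zero, Fin.val_one, show ((2:Fin 7):ℕ) = 2 from rfl, show ((3:Fin 7):ℕ) = 3 from rfl, show ((4:Fin 7):ℕ) = 4 from rfl, show ((5:Fin 7):ℕ) = 5 from rfl, show ((6:Fin 7):ℕ) = 6 from rfl] at this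
  have hvw₄' : v ≠ -w₄ := by
    intro h
    have := congrArg (fun z => ⟪z, β 6⟫) h
    simp only [inner_neg_left, ivβ, iw₄β] at this
    norm_num [hε₀, hε₄, Fin.val_zero, Fin.val_one, show ((2:Fin 7):ℕ) = 2 from rfl, show ((3:Fin 7):ℕ) = 3 from rfl, show ((4:Fin 7):ℕ) = 4 from rfl, show ((5:Fin 7):ℕ) = 5 from rfl, show ((6:Fin 7):ℕ) = 6 from rfl] at this
  -- inner products
  set a : ℝ := ⟪α₁, α₂⟫ with ha
  have i₀ : ⟪v, w₀⟫ = a + 7/8 := by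
    rw [hv, hw₀, aux_inner_comb β hβorth hβnorm α₁ α₂ hαβ₁ hαβ₂]
    have : ∑ j, ε₀ j * ε₀ j = 7 := by simp [hε₀, Fin.sum_univ_seven]
    rw [this]; try ring
  have i₂ : ⟪v, w₂⟫ = a + 3/8 := by
    rw [hv, hw₂, aux_inner_comb β hβorth hβnorm α₁ α₂ hαβ₁ hαβ₂]
    have : ∑ j, ε₀ j * ε₂ j = 3 := by simp [hε₀, hε₂, Fin.sum_univ_seven]; norm_num [Fin.val_zero, Fin.val_one, show ((2:Fin 7):ℕ) = 2 from rfl, show ((3:Fin 7):ℕ) = 3 from rfl, show ((4:Fin 7):ℕ) = 4 from rfl, show ((5:Fin 7):ℕ) = 5 from rfl, show ((6:Fin 7):ℕ) = 6 from rfl]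
    rw [this]; try ring
  have i₄ : ⟪v, w₄⟫ = a - 1/8 := by
    rw [hv, hw₄, aux_inner_comb β hβorth hβnorm α₁ α₂ hαβ₁ hαβ₂]
    have : ∑ j, ε₀ j * ε₄ j = -1 := by simp [hε₀, hε₄, Fin.sum_univ_seven]
    rw [this]; try ring
  have c₀ := hprod v hvR w₀ hw₀R hnv hnw₀ hvw₀ hvw₀'
  have c₂ := hprod v hvR w₂ hw₂R hnv hnw₂ hvw₂ hvw₂'
  have c₄ := hprod v hvR w₄ hw₄R hnv hnw₄ hvw₄ hvw₄'
  rw [i₀] at c₀; rw [i₂] at c₂; rw [i₄] at c₄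
  simp only [Set.mem_insert_iff, Set.mem_singleton_iff] at c₀ c₂ c₄
  have hpos : (0:ℝ) ≤ ⟪α₁ + α₂, α₁ + α₂⟫ := real_inner_self_nonneg
  rw [real_inner_add_add_self, hα₁, hα₂, ← ha] at hpos
  rcases c₀ with h0 | h0 | h0 <;> rcases c₂ with h2 | h2 | h2 <;>
    rcases c₄ with h4 | h4 | h4 <;> linarith
end

section
/- The rank r of a homogeneous even Clifford structure on a compact homogeneous manifold G/H with rk(G) = rk(H) satisfies, as a purely combinatorial consequence on weight systems: if W ⊂ 𝔱* is a nonempty admissible subsystem of roots of the form A + {∑_{j=1}^q ε_j β_j} (type I, A = −A), or {(∏ε_j)α_i + ∑ ε_j β_j} (type II, q odd), or A + {∑ ε_j β_j : ∏ ε_j = ±1} (types III–IV, q even), with all β_j ≠ 0, then q ≤ 4 in type I, q ≤ 7 in type II, and q ≤ 8 in types III–IV; consequently r = 2q+1 ≤ 9 for r odd, r = 2q ≤ 14 for r ≡ 2 mod 4, r = 2q ≤ 12 for r ≡ 4 mod 8, and r = 2q ≤ 16 for r ≡ 0 mod 8. -/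
open RealInnerProductSpace

variable {V : Type*} [NormedAddCommGroup V] [InnerProductSpace ℝ V]

/- ### Auxiliary lemmas -/

/-- Key lemma: for roots `v, w` of a root set, the quantity `2⟪v, v - w⟫/⟪v, v⟫` is an
integer, and it is at least `1` whenever `‖w‖ ≤ ‖v‖` and `w ≠ v`. -/
lemma key_lemma {R : Set V} (hR : IsRootSet R) {v w : V} (hv : v ∈ R) (hw : w ∈ R) :
    (∃ n : ℤ, 2 * ⟪v, v - w⟫ / ⟪v, v⟫ = (n : ℝ)) ∧
    (‖w‖ ≤ ‖v‖ → v ≠ w → 1 ≤ 2 * ⟪v, v - w⟫ / ⟪v, v⟫) := by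
  obtain ⟨hfin, h0, hred, hint, hrefl⟩ := hR
  have hv0 : v ≠ 0 := fun h => h0 (h ▸ hv)
  have hvv : 0 < ⟪v, v⟫ := by
    rw [real_inner_self_eq_norm_sq]
    exact pow_pos (norm_pos_iff.mpr hv0) 2
  obtain ⟨n, hn⟩ := hint v hv w hw
  have hsub : ⟪v, v - w⟫ = ⟪v, v⟫ - ⟪v, w⟫ := inner_sub_right v v w
  have hval : 2 * ⟪v, v - w⟫ / ⟪v, v⟫ = ((2 - n : ℤ) : ℝ) := by
    push_cast
    rw [hsub]
    field_simp at hn ⊢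
    linarith
  constructor
  · exact ⟨2 - n, hval⟩
  · intro hle hne
    have hpos : 0 < ⟪v, v - w⟫ := by
      have h1 : ⟪v, v - w⟫ = (‖v - w‖ ^ 2 + ‖v‖ ^ 2 - ‖w‖ ^ 2) / 2 := by
        rw [hsub, real_inner_self_eq_norm_sq]
        have := norm_sub_sq_real v w
        linarith
      have h2 : 0 < ‖v - w‖ ^ 2 := by
        have h : v - w ≠ 0 := sub_ne_zero.mpr hne
        exact pow_pos (norm_pos_iff.mpr h) 2
      have h3 : ‖w‖ ^ 2 ≤ ‖v‖ ^ 2 := by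
        have := norm_nonneg w
        nlinarith
      linarith
    have h4 : (0 : ℝ) < ((2 - n : ℤ) : ℝ) := hval ▸ (by positivity)
    have h5 : (1 : ℤ) ≤ 2 - n := by exact_mod_cast h4
    rw [hval]
    exact_mod_cast h5

/-- Averaging: if all pairwise sums in `T` are at least 1, the total is at least `card/2`. -/
lemma avg_bound {ι : Type*} [DecidableEq ι] (T : Finset ι) (y : ι → ℝ)
    (h : ∀ j ∈ T, ∀ k ∈ T, j ≠ k → 1 ≤ y j + y k) (hT : 2 ≤ T.card) :
    (T.card : ℝ) / 2 ≤ ∑ j ∈ T, y j := by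
  have hc1 : (1 : ℕ) ≤ T.card := le_trans one_le_two hT
  have hkey : ∀ j ∈ T, ∑ k ∈ T.erase j, (y j + y k)
      = ((T.card : ℝ) - 1) * y j + (∑ k ∈ T, y k - y j) := by
    intro j hj
    rw [Finset.sum_add_distrib, Finset.sum_const, Finset.sum_erase_eq_sub hj,
      Finset.card_erase_of_mem hj, nsmul_eq_mul, Nat.cast_sub hc1]
    push_cast
    ring
  have hlow : ∀ j ∈ T, ((T.card : ℝ) - 1) ≤ ∑ k ∈ T.erase j, (y j + y k) := by
    intro j hj
    have h1 : ∑ k ∈ T.erase j, (1:ℝ) ≤ ∑ k ∈ T.erase j, (y j + y k) :=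
      Finset.sum_le_sum (fun k hk =>
        h j hj k (Finset.mem_of_mem_erase hk) (Ne.symm (Finset.ne_of_mem_erase hk)))
    rw [Finset.sum_const, Finset.card_erase_of_mem hj, nsmul_eq_mul, mul_one,
      Nat.cast_sub hc1] at h1
    exact_mod_cast h1
  have H : (T.card : ℝ) * ((T.card : ℝ) - 1) ≤ 2 * ((T.card : ℝ) - 1) * ∑ j ∈ T, y j := by
    calc (T.card : ℝ) * ((T.card : ℝ) - 1) = ∑ _j ∈ T, ((T.card : ℝ) - 1) := by
          rw [Finset.sum_const, nsmul_eq_mul]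
      _ ≤ ∑ j ∈ T, ∑ k ∈ T.erase j, (y j + y k) := Finset.sum_le_sum hlow
      _ = ∑ j ∈ T, (((T.card : ℝ) - 1) * y j + (∑ k ∈ T, y k - y j)) :=
          Finset.sum_congr rfl hkey
      _ = 2 * ((T.card : ℝ) - 1) * ∑ j ∈ T, y j := by
          rw [Finset.sum_add_distrib, ← Finset.mul_sum, Finset.sum_sub_distrib,
            Finset.sum_const, nsmul_eq_mul]
          ring
  have hpos : (0:ℝ) < (T.card : ℝ) - 1 := by
    have : (2:ℝ) ≤ (T.card : ℝ) := by exact_mod_cast hT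
    linarith
  nlinarith [H, hpos]

/-- Two disjoint "null pairs" are impossible. -/
lemma nullpair_contra {q : ℕ} (c : Fin q → V) (y : Fin q → ℝ)
    (hc : ∀ j, c j ≠ 0)
    (hA1 : ∀ j k, j ≠ k → c j + c k ≠ 0 → 1 ≤ y j + y k)
    (hA2 : ∀ j k, c j + c k = 0 → y j + y k = 0)
    {a b a' b' : Fin q} (h1 : c a + c b = 0) (h2 : c a' + c b' = 0)
    (hab : a ≠ b) (ha'b' : a' ≠ b') (d1 : a ≠ a') (d2 : a ≠ b') (d3 : b ≠ a') (d4 : b ≠ b') :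
    False := by
  have hdouble : ∀ x : Fin q, c x + c x ≠ 0 := by
    intro x hx
    apply hc x
    have : (2:ℝ) • c x = 0 := by rw [two_smul]; exact hx
    exact (smul_eq_zero.mp this).resolve_left (by norm_num)
  have z1 : y a + y b = 0 := hA2 a b h1
  have z2 : y a' + y b' = 0 := hA2 a' b' h2
  by_cases h : c a + c a' = 0
  · have hb : c b = -c a := eq_neg_of_add_eq_zero_right h1
    have ha' : c a' = -c a := eq_neg_of_add_eq_zero_right h
    have hb' : c b' = c a := by
      rw [eq_neg_of_add_eq_zero_right h2, ha', neg_neg]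
    have k1 : 1 ≤ y a + y b' := hA1 a b' d2 (by rw [hb']; exact hdouble a)
    have k2 : 1 ≤ y b + y a' := hA1 b a' d3 (by
      rw [hb, ha', ← neg_add, neg_ne_zero]
      exact hdouble a)
    linarith
  · have k1 : 1 ≤ y a + y a' := hA1 a a' d1 h
    have k2 : 1 ≤ y b + y b' := hA1 b b' d4 (by
      rw [eq_neg_of_add_eq_zero_right h1, eq_neg_of_add_eq_zero_right h2,
        ← neg_add, neg_ne_zero]
      exact h)
    linarith

lemma sum_update_smul {q : ℕ} (β : Fin q → V) (ε : Fin q → ℝ) (j₀ : Fin q) (a : ℝ) :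
    ∑ j, (Function.update ε j₀ a j) • β j = (∑ j, ε j • β j) + (a - ε j₀) • β j₀ := by
  have hfun : (fun j => (Function.update ε j₀ a j) • β j)
      = Function.update (fun j => ε j • β j) j₀ (a • β j₀) := by
    funext j
    rcases eq_or_ne j j₀ with h | h
    · subst h; simp
    · rw [Function.update_of_ne h, Function.update_of_ne h]
  rw [hfun, Finset.sum_update_of_mem (Finset.mem_univ j₀),
    Finset.sdiff_singleton_eq_erase,
    Finset.sum_erase_eq_sub (Finset.mem_univ j₀), sub_smul]
  abel

lemma prod_update_neg {q : ℕ} (ε : Fin q → ℝ) (j₀ : Fin q) :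
    ∏ j, Function.update ε j₀ (-(ε j₀)) j = -∏ j, ε j := by
  rw [Finset.prod_update_of_mem (Finset.mem_univ j₀),
    Finset.sdiff_singleton_eq_erase,
    ← Finset.mul_prod_erase Finset.univ ε (Finset.mem_univ j₀)]
  ring

lemma update_signs {q : ℕ} {ε : Fin q → ℝ} (hε : ∀ j, ε j = 1 ∨ ε j = -1)
    (j₀ : Fin q) {a : ℝ} (ha : a = 1 ∨ a = -1) :
    ∀ j, Function.update ε j₀ a j = 1 ∨ Function.update ε j₀ a j = -1 := by
  intro j
  rcases eq_or_ne j j₀ with h | h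
  · subst h; rw [Function.update_self]; exact ha
  · rw [Function.update_of_ne h]; exact hε j

lemma neg_sign {a : ℝ} (ha : a = 1 ∨ a = -1) : -a = 1 ∨ -a = -1 := by
  rcases ha with h | h <;> rw [h] <;> [right; left] <;> norm_num


/-- If two multiples `s • x` and `r • x` of a vector lie in a root set with `s ≠ 0`,
`r ≠ s`, `r ≠ -s`, we get a contradiction with reducedness. -/
lemma prop_contra {R : Set V} (hR : IsRootSet R) {x : V} {s r : ℝ}
    (hv : s • x ∈ R) (hw : r • x ∈ R) (hs : s ≠ 0) (h1 : r ≠ s) (h2 : r ≠ -s) : False := by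
  have h : (r / s) • (s • x) = r • x := by rw [smul_smul, div_mul_cancel₀ _ hs]
  rcases hR.2.2.1 (s • x) hv (r / s) (by rw [h]; exact hw) with h3 | h3
  · exact h1 (by field_simp at h3; linarith)
  · exact h2 (by field_simp at h3; linarith)

/-- Type I bound. -/
lemma typeI_bound (p q : ℕ) (hp : 0 < p) (α : Fin p → V) (β : Fin q → V)
    (hβ : ∀ j, β j ≠ 0) (hα : ∀ i, ∃ i', α i' = -α i)
    (hadm : IsAdmissible {v : V | ∃ (i : Fin p) (ε : Fin q → ℝ),
      (∀ j, ε j = 1 ∨ ε j = -1) ∧ v = α i + ∑ j, ε j • β j}) :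
    q ≤ 4 := by
  set P : Set V := {v : V | ∃ (i : Fin p) (ε : Fin q → ℝ),
    (∀ j, ε j = 1 ∨ ε j = -1) ∧ v = α i + ∑ j, ε j • β j} with hPdef
  obtain ⟨⟨hspan, R, ⟨hRset, hRspan⟩, hPR⟩, -⟩ := hadm
  have hPmem : ∀ (i : Fin p) (ε : Fin q → ℝ), (∀ j, ε j = 1 ∨ ε j = -1) →
      α i + ∑ j, ε j • β j ∈ P := fun i ε hε => ⟨i, ε, hε, rfl⟩
  have hPfin : P.Finite := hRset.1.subset hPR
  obtain ⟨v, hvP, hvmax⟩ := Set.exists_max_image P (fun w => ‖w‖) hPfin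
    ⟨_, hPmem ⟨0, hp⟩ (fun _ => 1) (fun _ => Or.inl rfl)⟩
  obtain ⟨i, ε, hε, hveq⟩ := hvP
  have hεne : ∀ j, ε j ≠ 0 := fun j => by rcases hε j with h | h <;> rw [h] <;> norm_num
  have hvP' : v ∈ P := ⟨i, ε, hε, hveq⟩
  have hvR : v ∈ R := hPR hvP'
  have hvv : 0 < ⟪v, v⟫ := by
    rw [real_inner_self_eq_norm_sq]
    exact pow_pos (norm_pos_iff.mpr (fun h => hRset.2.1 (h ▸ hvR))) 2
  -- single flips give `y j ≥ 1`
  have hy : ∀ j, 1 ≤ 2 * ⟪v, (2 * ε j) • β j⟫ / ⟪v, v⟫ := by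
    intro j
    have hε' := update_signs hε j (neg_sign (hε j))
    have hw : α i + ∑ k, (Function.update ε j (-(ε j)) k) • β k ∈ P := hPmem i _ hε'
    have hdiff : v - (α i + ∑ k, (Function.update ε j (-(ε j)) k) • β k)
        = (2 * ε j) • β j := by
      rw [hveq, sum_update_smul]
      have h2 : (-(ε j) - ε j) = -(2 * ε j) := by ring
      rw [h2, neg_smul]
      abel
    have hne : v ≠ α i + ∑ k, (Function.update ε j (-(ε j)) k) • β k := by
      intro h
      have h0 : (2 * ε j) • β j = 0 := by rw [← hdiff, h, sub_self]
      rcases smul_eq_zero.mp h0 with h' | h'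
      · exact (mul_ne_zero two_ne_zero (hεne j)) h'
      · exact hβ j h'
    have hk := (key_lemma hRset hvR (hPR hw)).2 (hvmax _ hw) hne
    rwa [hdiff] at hk
  -- the `α`-flip gives `t ≥ 0`
  obtain ⟨i', hi'⟩ := hα i
  have hwα : -α i + ∑ k, ε k • β k ∈ P := ⟨i', ε, hε, by rw [hi']⟩
  have ht : 0 ≤ 2 * ⟪v, (2:ℝ) • α i⟫ / ⟪v, v⟫ := by
    by_cases hcase : v = -α i + ∑ k, ε k • β k
    · have hα0 : α i = 0 := by
        have h2 : α i + ∑ k, ε k • β k = -α i + ∑ k, ε k • β k := hveq ▸ hcase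
        have h3 : α i = -α i := by
          have := add_right_cancel h2
          exact this
        have h5 : (2:ℝ) • α i = 0 := by
          rw [two_smul]
          nth_rewrite 2 [h3]
          simp
        exact (smul_eq_zero.mp h5).resolve_left (by norm_num)
      rw [hα0]
      simp
    · have hdiffα : v - (-α i + ∑ k, ε k • β k) = (2:ℝ) • α i := by
        rw [hveq, two_smul]
        abel
      have hk := (key_lemma hRset hvR (hPR hwα)).2 (hvmax _ hwα) hcase
      rw [hdiffα] at hk
      linarith
  -- the total is 4
  have hsum : 2 * ⟪v, (2:ℝ) • α i⟫ / ⟪v, v⟫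
      + ∑ j, 2 * ⟪v, (2 * ε j) • β j⟫ / ⟪v, v⟫ = 4 := by
    have e1 : ∑ j, 2 * ⟪v, (2 * ε j) • β j⟫ / ⟪v, v⟫
        = 2 * ⟪v, ∑ j, (2 * ε j) • β j⟫ / ⟪v, v⟫ := by
      rw [inner_sum, Finset.mul_sum, Finset.sum_div]
    rw [e1, ← add_div, ← mul_add, ← inner_add_right]
    have e2 : (2:ℝ) • α i + ∑ j, (2 * ε j) • β j = (2:ℝ) • v := by
      rw [hveq, smul_add, Finset.smul_sum]
      congr 1
      refine Finset.sum_congr rfl (fun j _ => ?_)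
      rw [smul_smul]
    rw [e2, real_inner_smul_right]
    field_simp
    ring
  have hqle : (q : ℝ) ≤ ∑ j, 2 * ⟪v, (2 * ε j) • β j⟫ / ⟪v, v⟫ := by
    calc (q:ℝ) = ∑ _j : Fin q, (1:ℝ) := by simp
      _ ≤ _ := Finset.sum_le_sum fun j _ => hy j
  have : (q:ℝ) ≤ 4 := by linarith
  exact_mod_cast this

set_option maxHeartbeats 4000000 in
/-- Type II bound. -/
lemma typeII_bound (p q : ℕ) (hp : 0 < p) (hq : Odd q) (α : Fin p → V) (β : Fin q → V)
    (hβ : ∀ j, β j ≠ 0)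
    (hadm : IsAdmissible {v : V | ∃ (i : Fin p) (ε : Fin q → ℝ),
      (∀ j, ε j = 1 ∨ ε j = -1) ∧ v = (∏ j, ε j) • α i + ∑ j, ε j • β j}) :
    q ≤ 7 := by
  by_contra hq8
  have hq9 : 9 ≤ q := by obtain ⟨m, hm⟩ := hq; omega
  set P : Set V := {v : V | ∃ (i : Fin p) (ε : Fin q → ℝ),
    (∀ j, ε j = 1 ∨ ε j = -1) ∧ v = (∏ j, ε j) • α i + ∑ j, ε j • β j} with hPdef
  obtain ⟨⟨hspan, R, ⟨hRset, hRspan⟩, hPR⟩, -⟩ := hadm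
  have hPmem : ∀ (i : Fin p) (ε : Fin q → ℝ), (∀ j, ε j = 1 ∨ ε j = -1) →
      (∏ j, ε j) • α i + ∑ j, ε j • β j ∈ P := fun i ε hε => ⟨i, ε, hε, rfl⟩
  have hPfin : P.Finite := hRset.1.subset hPR
  have hPne : P.Nonempty := ⟨_, hPmem ⟨0, hp⟩ (fun _ => 1) (fun _ => Or.inl rfl)⟩
  obtain ⟨v, hvP, hvmax⟩ := Set.exists_max_image P (fun w => ‖w‖) hPfin hPne
  obtain ⟨i, ε, hε, hveq⟩ := hvP
  have hvP' : v ∈ P := ⟨i, ε, hε, hveq⟩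
  have hvR : v ∈ R := hPR hvP'
  have hvv : 0 < ⟪v, v⟫ := by
    rw [real_inner_self_eq_norm_sq]
    exact pow_pos (norm_pos_iff.mpr (fun h => hRset.2.1 (h ▸ hvR))) 2
  set C : Fin q → V := fun j => ε j • β j with hCdef
  set D : V := (∏ j, ε j) • α i with hDdef
  have hCne : ∀ j, C j ≠ 0 := by
    intro j h
    rcases smul_eq_zero.mp h with h' | h'
    · rcases hε j with h2 | h2 <;> rw [h2] at h' <;> norm_num at h'
    · exact hβ j h'
  have hCC : ∀ j, C j + C j ≠ 0 := by
    intro j h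
    apply hCne j
    have h2 : (2:ℝ) • C j = 0 := by rw [two_smul]; exact h
    exact (smul_eq_zero.mp h2).resolve_left (by norm_num)
  set y : Fin q → ℝ := fun j => 4 * ⟪v, C j⟫ / ⟪v, v⟫ with hydef
  -- double flips stay in P
  have hflip : ∀ j k : Fin q, j ≠ k →
      D + ((∑ l, ε l • β l) - (2:ℝ) • (C j + C k)) ∈ P := by
    intro j k hjk
    have hs1 : ∀ l, Function.update ε j (-(ε j)) l = 1 ∨ Function.update ε j (-(ε j)) l = -1 :=
      update_signs hε j (neg_sign (hε j))
    have hs2 := update_signs hs1 k (neg_sign (hs1 k))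
    have hprod2 : ∏ l, Function.update (Function.update ε j (-(ε j))) k
        (-(Function.update ε j (-(ε j)) k)) l = ∏ l, ε l := by
      rw [prod_update_neg, prod_update_neg, neg_neg]
    have heq : ∑ l, (Function.update (Function.update ε j (-(ε j))) k
        (-(Function.update ε j (-(ε j)) k)) l) • β l
        = (∑ l, ε l • β l) - (2:ℝ) • (C j + C k) := by
      rw [sum_update_smul, sum_update_smul, Function.update_of_ne (Ne.symm hjk)]
      show _ = _ - (2:ℝ) • (ε j • β j + ε k • β k)
      module
    have hmem := hPmem i _ hs2
    rw [hprod2, heq, ← hDdef] at hmem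
    exact hmem
  -- single flips stay in P
  have hflip1 : ∀ ℓ : Fin q,
      -D + ((∑ l, ε l • β l) - (2:ℝ) • C ℓ) ∈ P := by
    intro ℓ
    have hs1 : ∀ l, Function.update ε ℓ (-(ε ℓ)) l = 1 ∨ Function.update ε ℓ (-(ε ℓ)) l = -1 :=
      update_signs hε ℓ (neg_sign (hε ℓ))
    have hprod1 : ∏ l, Function.update ε ℓ (-(ε ℓ)) l = -∏ l, ε l := prod_update_neg ε ℓ
    have heq : ∑ l, (Function.update ε ℓ (-(ε ℓ)) l) • β l
        = (∑ l, ε l • β l) - (2:ℝ) • C ℓ := by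
      rw [sum_update_smul]
      show _ = _ - (2:ℝ) • (ε ℓ • β ℓ)
      module
    have hmem := hPmem i _ hs1
    rw [hprod1, heq, neg_smul, ← hDdef] at hmem
    exact hmem
  -- pair facts
  have hA1 : ∀ j k, j ≠ k → C j + C k ≠ 0 → 1 ≤ y j + y k := by
    intro j k hjk hne0
    have hw := hflip j k hjk
    have hdiff : v - (D + ((∑ l, ε l • β l) - (2:ℝ) • (C j + C k)))
        = (2:ℝ) • (C j + C k) := by
      rw [hveq, hDdef]; abel
    have hne : v ≠ D + ((∑ l, ε l • β l) - (2:ℝ) • (C j + C k)) := by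
      intro h
      apply hne0
      have h0 : (2:ℝ) • (C j + C k) = 0 := by rw [← hdiff, h, sub_self]
      exact (smul_eq_zero.mp h0).resolve_left (by norm_num)
    have hk2 := (key_lemma hRset hvR (hPR hw)).2 (hvmax _ hw) hne
    rw [hdiff] at hk2
    have he : 2 * ⟪v, (2:ℝ) • (C j + C k)⟫ / ⟪v, v⟫ = y j + y k := by
      rw [real_inner_smul_right, inner_add_right]
      simp only [hydef]
      ring
    linarith [he ▸ hk2]
  have hA2 : ∀ j k : Fin q, C j + C k = 0 → y j + y k = 0 := by
    intro j k h0
    have hk' : C k = -C j := eq_neg_of_add_eq_zero_right h0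
    simp only [hydef, hk', inner_neg_right]
    ring
  -- single-flip facts
  have hB1 : ∀ ℓ : Fin q, D + C ℓ ≠ 0 → 1 ≤ 4 * ⟪v, D⟫ / ⟪v, v⟫ + y ℓ := by
    intro ℓ hne0
    have hw := hflip1 ℓ
    have hdiff : v - (-D + ((∑ l, ε l • β l) - (2:ℝ) • C ℓ)) = (2:ℝ) • (D + C ℓ) := by
      rw [hveq, hDdef]; module
    have hne : v ≠ -D + ((∑ l, ε l • β l) - (2:ℝ) • C ℓ) := by
      intro h
      apply hne0
      have h0 : (2:ℝ) • (D + C ℓ) = 0 := by rw [← hdiff, h, sub_self]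
      exact (smul_eq_zero.mp h0).resolve_left (by norm_num)
    have hk2 := (key_lemma hRset hvR (hPR hw)).2 (hvmax _ hw) hne
    rw [hdiff] at hk2
    have he : 2 * ⟪v, (2:ℝ) • (D + C ℓ)⟫ / ⟪v, v⟫ = 4 * ⟪v, D⟫ / ⟪v, v⟫ + y ℓ := by
      rw [real_inner_smul_right, inner_add_right]
      simp only [hydef]
      ring
    linarith [he ▸ hk2]
  have hB2 : ∀ ℓ : Fin q, D + C ℓ = 0 → 4 * ⟪v, D⟫ / ⟪v, v⟫ + y ℓ = 0 := by
    intro ℓ h0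
    have hk' : C ℓ = -D := eq_neg_of_add_eq_zero_right h0
    simp only [hydef, hk', inner_neg_right]
    ring
  -- sum identity
  have hsum : 4 * ⟪v, D⟫ / ⟪v, v⟫ + ∑ j, y j = 4 := by
    have e1 : ∑ j, y j = 4 * ⟪v, ∑ j, C j⟫ / ⟪v, v⟫ := by
      rw [inner_sum, Finset.mul_sum, Finset.sum_div]
    have e2 : ⟪v, D⟫ + ⟪v, ∑ j, C j⟫ = ⟪v, v⟫ := by
      rw [← inner_add_right]
      congr 1
      rw [hveq, hDdef]
    rw [e1]
    field_simp
    linarith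
  have hcardU : (Finset.univ : Finset (Fin q)).card = q := by simp
  have hqR : (9:ℝ) ≤ (q:ℝ) := by exact_mod_cast hq9
  -- a reusable "good center" contradiction
  have hmain : ∀ ℓ : Fin q, D + C ℓ ≠ 0 →
      (∀ a b : Fin q, a ≠ b → a ≠ ℓ → b ≠ ℓ → C a + C b ≠ 0) → False := by
    intro ℓ hDℓ hgood
    have h1 := hB1 ℓ hDℓ
    have hcardT : (Finset.univ.erase ℓ).card = q - 1 := by
      rw [Finset.card_erase_of_mem (Finset.mem_univ _), hcardU]
    have havg := avg_bound (Finset.univ.erase ℓ) y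
      (fun a ha b hb hab => hA1 a b hab
        (hgood a b hab (Finset.ne_of_mem_erase ha) (Finset.ne_of_mem_erase hb)))
      (by rw [hcardT]; omega)
    rw [hcardT, Nat.cast_sub (by omega : 1 ≤ q)] at havg
    have hdecomp : ∑ j, y j = y ℓ + ∑ j ∈ Finset.univ.erase ℓ, y j :=
      (Finset.add_sum_erase _ y (Finset.mem_univ ℓ)).symm
    push_cast at havg
    linarith
  -- a reusable proportionality contradiction when all C j, j ≠ ℓ, equal -x and v = D + ∑ C
  have hprop : ∀ (x : V) (k₁ k₂ : Fin q), k₁ ≠ k₂ →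
      v = ((1:ℝ) - (q:ℝ)) • x → C k₁ = -x → C k₂ = -x → False := by
    intro x k₁ k₂ hk12 hv1 hc1 hc2
    have hw := hflip k₁ k₂ hk12
    have hw2 : D + ((∑ l, ε l • β l) - (2:ℝ) • (C k₁ + C k₂))
        = (((1:ℝ) - (q:ℝ)) + 4) • x := by
      have hDS : D + (∑ l, ε l • β l) = v := by rw [hveq, hDdef]
      have : D + ((∑ l, ε l • β l) - (2:ℝ) • (C k₁ + C k₂))
          = (D + (∑ l, ε l • β l)) - (2:ℝ) • (C k₁ + C k₂) := by abel
      rw [this, hDS, hv1, hc1, hc2]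
      module
    refine prop_contra hRset (hv1 ▸ hvR) (hw2 ▸ hPR hw) ?_ ?_ ?_
    · intro h; rw [sub_eq_zero] at h; nlinarith
    · intro h; nlinarith
    · intro h; nlinarith
  by_cases hN : ∀ a b : Fin q, a ≠ b → C a + C b ≠ 0
  · -- no null pairs
    by_cases hD : ∃ ℓ : Fin q, D + C ℓ ≠ 0
    · obtain ⟨ℓ, hℓ⟩ := hD
      exact hmain ℓ hℓ (fun a b hab _ _ => hN a b hab)
    · push_neg at hD
      have hCk : ∀ j : Fin q, C j = -D := fun j => eq_neg_of_add_eq_zero_right (hD j)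
      have hcard2 : 1 < (Finset.univ : Finset (Fin q)).card := by rw [hcardU]; omega
      obtain ⟨k₁, -, k₂, -, hk12⟩ := Finset.one_lt_card.mp hcard2
      have hv1 : v = ((1:ℝ) - (q:ℝ)) • D := by
        rw [hveq, hDdef]
        have hCsum : ∑ l, ε l • β l = (q:ℝ) • (-D) := by
          show ∑ l, C l = _
          rw [Finset.sum_congr rfl (fun j _ => hCk j), Finset.sum_const, hcardU,
            ← Nat.cast_smul_eq_nsmul ℝ]
        rw [hCsum, hDdef]
        module
      exact hprop D k₁ k₂ hk12 hv1 (hCk k₁) (hCk k₂)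
  · push_neg at hN
    obtain ⟨j₀, k₀, hjk₀, hnull₀⟩ := hN
    have hmeet : ∀ a b : Fin q, a ≠ b → C a + C b = 0 →
        (a = j₀ ∨ a = k₀ ∨ b = j₀ ∨ b = k₀) := by
      intro a b hab h0
      by_contra hno
      push_neg at hno
      obtain ⟨h1, h2, h3, h4⟩ := hno
      exact nullpair_contra C y hCne hA1 hA2 h0 hnull₀ hab hjk₀ h1 h2 h3 h4
    have hcenter : ∃ ℓ₀ pc : Fin q, ℓ₀ ≠ pc ∧ C ℓ₀ + C pc = 0 ∧
        (∀ a b : Fin q, a ≠ b → a ≠ ℓ₀ → b ≠ ℓ₀ → C a + C b ≠ 0) := by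
      by_cases hcj : ∀ a b : Fin q, a ≠ b → a ≠ j₀ → b ≠ j₀ → C a + C b ≠ 0
      · exact ⟨j₀, k₀, hjk₀, hnull₀, hcj⟩
      · push_neg at hcj
        obtain ⟨a, b, hab, haj, hbj, h0⟩ := hcj
        refine ⟨k₀, j₀, Ne.symm hjk₀, by rw [add_comm]; exact hnull₀, ?_⟩
        intro a' b' ha'b' ha'k hb'k h0'
        have final : ∀ z z' : Fin q, z ≠ j₀ → z ≠ k₀ → z' ≠ j₀ → z' ≠ k₀ →
            C z + C k₀ = 0 → C j₀ + C z' = 0 → False := by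
          intro z z' hzj hzk hz'j hz'k hz0 hz'0
          rcases eq_or_ne z z' with hzz | hzz
          · subst hzz
            have e1 : C z = -C k₀ := eq_neg_of_add_eq_zero_left hz0
            have e2 : C z = -C j₀ := eq_neg_of_add_eq_zero_right hz'0
            have : C j₀ = C k₀ := by rw [← neg_neg (C j₀), ← e2, e1, neg_neg]
            apply hCC j₀
            rw [← this] at hnull₀
            exact hnull₀
          · exact nullpair_contra C y hCne hA1 hA2 hz0 hz'0 hzk (Ne.symm hz'j) hzj hzz
              (Ne.symm hjk₀) (Ne.symm hz'k)
        have hzab : ∃ z : Fin q, z ≠ j₀ ∧ z ≠ k₀ ∧ C z + C k₀ = 0 := by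
          rcases hmeet a b hab h0 with h | h | h | h
          · exact absurd h haj
          · exact ⟨b, hbj, fun hbk => hab (by rw [h, hbk]), by rw [← h, add_comm]; exact h0⟩
          · exact absurd h hbj
          · exact ⟨a, haj, fun hak => hab (by rw [h, hak]), by rw [← h]; exact h0⟩
        have hz'ab : ∃ z' : Fin q, z' ≠ j₀ ∧ z' ≠ k₀ ∧ C j₀ + C z' = 0 := by
          rcases hmeet a' b' ha'b' h0' with h | h | h | h
          · exact ⟨b', fun hbj' => ha'b' (by rw [h, hbj']), hb'k, by rw [← h]; exact h0'⟩
          · exact absurd h ha'k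
          · exact ⟨a', fun haj' => ha'b' (by rw [h, haj']), ha'k, by rw [← h, add_comm]; exact h0'⟩
          · exact absurd h hb'k
        obtain ⟨z, hzj, hzk, hz0⟩ := hzab
        obtain ⟨z', hz'j, hz'k, hz'0⟩ := hz'ab
        exact final z z' hzj hzk hz'j hz'k hz0 hz'0
    obtain ⟨ℓ₀, pc, hℓpc, hnullℓ, hcent⟩ := hcenter
    by_cases hDℓ : D + C ℓ₀ ≠ 0
    · exact hmain ℓ₀ hDℓ hcent
    · push_neg at hDℓ
      have htyℓ := hB2 ℓ₀ hDℓ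
      have hD0 : D = -C ℓ₀ := eq_neg_of_add_eq_zero_left hDℓ
      by_cases hK : ∀ j : Fin q, j ≠ ℓ₀ → C ℓ₀ + C j = 0
      · -- all other indices are partners of ℓ₀
        have hcard2 : 1 < (Finset.univ.erase ℓ₀).card := by
          rw [Finset.card_erase_of_mem (Finset.mem_univ _), hcardU]; omega
        obtain ⟨k₁, hk₁, k₂, hk₂, hk12⟩ := Finset.one_lt_card.mp hcard2
        have hk₁ℓ : k₁ ≠ ℓ₀ := Finset.ne_of_mem_erase hk₁
        have hk₂ℓ : k₂ ≠ ℓ₀ := Finset.ne_of_mem_erase hk₂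
        have hCk : ∀ j : Fin q, j ≠ ℓ₀ → C j = -C ℓ₀ :=
          fun j hj => eq_neg_of_add_eq_zero_right (hK j hj)
        have hv1 : v = ((1:ℝ) - (q:ℝ)) • C ℓ₀ := by
          have hCsum : ∑ l, ε l • β l = C ℓ₀ + ((q:ℝ) - 1) • (-C ℓ₀) := by
            show ∑ l, C l = _
            rw [← Finset.add_sum_erase _ C (Finset.mem_univ ℓ₀),
              Finset.sum_congr rfl (fun j hj => hCk j (Finset.ne_of_mem_erase hj)),
              Finset.sum_const, Finset.card_erase_of_mem (Finset.mem_univ _), hcardU,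
              ← Nat.cast_smul_eq_nsmul ℝ, Nat.cast_sub (by omega : 1 ≤ q)]
            push_cast
            module
          rw [hveq, hCsum, hD0]
          module
        exact hprop (C ℓ₀) k₁ k₂ hk12 hv1 (hCk k₁ hk₁ℓ) (hCk k₂ hk₂ℓ)
      · push_neg at hK
        obtain ⟨j₁, hj₁ℓ, hj₁⟩ := hK
        have h1 : 1 ≤ y ℓ₀ + y j₁ := hA1 ℓ₀ j₁ (Ne.symm hj₁ℓ) hj₁
        have hj₁pc : j₁ ≠ pc := fun h => hj₁ (h ▸ hnullℓ)
        have hypc : y ℓ₀ + y pc = 0 := hA2 ℓ₀ pc hnullℓ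
        by_cases hKK : ∃ k' : Fin q, k' ≠ ℓ₀ ∧ k' ≠ pc ∧ C ℓ₀ + C k' = 0
        · obtain ⟨k', hk'ℓ, hk'pc, hk'0⟩ := hKK
          have hyk' : y ℓ₀ + y k' = 0 := hA2 ℓ₀ k' hk'0
          have hgoodpk : C pc + C k' ≠ 0 := by
            rw [eq_neg_of_add_eq_zero_right hnullℓ, eq_neg_of_add_eq_zero_right hk'0,
              ← neg_add, neg_ne_zero]
            exact hCC ℓ₀
          have h2 : 1 ≤ y pc + y k' := hA1 pc k' (Ne.symm hk'pc) hgoodpk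
          -- T'' = erase ℓ₀, j₁, pc
          have hj₁mem : j₁ ∈ Finset.univ.erase ℓ₀ :=
            Finset.mem_erase.mpr ⟨hj₁ℓ, Finset.mem_univ _⟩
          have hpcmem : pc ∈ (Finset.univ.erase ℓ₀).erase j₁ :=
            Finset.mem_erase.mpr ⟨Ne.symm hj₁pc,
              Finset.mem_erase.mpr ⟨Ne.symm hℓpc, Finset.mem_univ _⟩⟩
          have hcardT'' : (((Finset.univ.erase ℓ₀).erase j₁).erase pc).card = q - 3 := by
            rw [Finset.card_erase_of_mem hpcmem, Finset.card_erase_of_mem hj₁mem,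
              Finset.card_erase_of_mem (Finset.mem_univ _), hcardU]
            omega
          have havg := avg_bound (((Finset.univ.erase ℓ₀).erase j₁).erase pc) y
            (fun a ha b hb hab => hA1 a b hab
              (hcent a b hab
                (Finset.ne_of_mem_erase (Finset.mem_of_mem_erase (Finset.mem_of_mem_erase ha)))
                (Finset.ne_of_mem_erase (Finset.mem_of_mem_erase (Finset.mem_of_mem_erase hb)))))
            (by rw [hcardT'']; omega)
          rw [hcardT'', Nat.cast_sub (by omega : 3 ≤ q)] at havg
          have hdecomp : ∑ j, y j = y ℓ₀ + (y j₁ + (y pc +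
              ∑ j ∈ ((Finset.univ.erase ℓ₀).erase j₁).erase pc, y j)) := by
            rw [← Finset.add_sum_erase _ y (Finset.mem_univ ℓ₀),
              ← Finset.add_sum_erase _ y hj₁mem, ← Finset.add_sum_erase _ y hpcmem]
          push_cast at havg
          linarith
        · push_neg at hKK
          -- the only partner of ℓ₀ is pc; use T₂ = univ.erase pc
          have hDpc : D + C pc ≠ 0 := by
            rw [hD0, eq_neg_of_add_eq_zero_right hnullℓ, ← neg_add, neg_ne_zero]
            exact hCC ℓ₀
          have hBpc := hB1 pc hDpc
          have hcardT₂ : (Finset.univ.erase pc).card = q - 1 := by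
            rw [Finset.card_erase_of_mem (Finset.mem_univ _), hcardU]
          have hgoodT₂ : ∀ a ∈ Finset.univ.erase pc, ∀ b ∈ Finset.univ.erase pc,
              a ≠ b → 1 ≤ y a + y b := by
            intro a ha b hb hab
            have hapc : a ≠ pc := Finset.ne_of_mem_erase ha
            have hbpc : b ≠ pc := Finset.ne_of_mem_erase hb
            rcases eq_or_ne a ℓ₀ with haℓ | haℓ
            · have hbℓ : b ≠ ℓ₀ := by rw [← haℓ]; exact Ne.symm hab
              apply hA1 a b hab
              rw [haℓ]
              exact hKK b hbℓ hbpc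
            · rcases eq_or_ne b ℓ₀ with hbℓ | hbℓ
              · apply hA1 a b hab
                rw [hbℓ, add_comm]
                exact hKK a haℓ hapc
              · exact hA1 a b hab (hcent a b hab haℓ hbℓ)
          have havg := avg_bound (Finset.univ.erase pc) y hgoodT₂ (by rw [hcardT₂]; omega)
          rw [hcardT₂, Nat.cast_sub (by omega : 1 ≤ q)] at havg
          have hdecomp : ∑ j, y j = y pc + ∑ j ∈ Finset.univ.erase pc, y j :=
            (Finset.add_sum_erase _ y (Finset.mem_univ pc)).symm
          push_cast at havg
          linarith

set_option maxHeartbeats 2000000 in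
/-- Types III–IV bound. -/
lemma typeIII_bound (c : ℝ) (hc : c = 1 ∨ c = -1) (p q : ℕ) (hp : 0 < p) (hq : Even q)
    (α : Fin p → V) (β : Fin q → V) (hβ : ∀ j, β j ≠ 0) (hα : ∀ i, ∃ i', α i' = -α i)
    (hadm : IsAdmissible {v : V | ∃ (i : Fin p) (ε : Fin q → ℝ),
      (∀ j, ε j = 1 ∨ ε j = -1) ∧ (∏ j, ε j) = c ∧ v = α i + ∑ j, ε j • β j}) :
    q ≤ 8 := by
  by_contra hq8
  have hq9 : 9 ≤ q := by omega
  have hq0 : 0 < q := by omega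
  set P : Set V := {v : V | ∃ (i : Fin p) (ε : Fin q → ℝ),
    (∀ j, ε j = 1 ∨ ε j = -1) ∧ (∏ j, ε j) = c ∧ v = α i + ∑ j, ε j • β j} with hPdef
  obtain ⟨⟨hspan, R, ⟨hRset, hRspan⟩, hPR⟩, -⟩ := hadm
  have hPmem : ∀ (i : Fin p) (ε : Fin q → ℝ), (∀ j, ε j = 1 ∨ ε j = -1) → (∏ j, ε j) = c →
      α i + ∑ j, ε j • β j ∈ P := fun i ε hε hprod => ⟨i, ε, hε, hprod, rfl⟩
  have hPfin : P.Finite := hRset.1.subset hPR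
  have hPne : P.Nonempty := by
    rcases hc with hc1 | hc1
    · exact ⟨_, hPmem ⟨0, hp⟩ (fun _ => 1) (fun _ => Or.inl rfl) (by rw [hc1]; simp)⟩
    · refine ⟨_, hPmem ⟨0, hp⟩ (Function.update (fun _ => (1:ℝ)) ⟨0, hq0⟩ (-1))
        (update_signs (fun _ => Or.inl rfl) _ (Or.inr rfl)) ?_⟩
      rw [hc1]
      have h := prod_update_neg (fun _ => (1:ℝ)) (⟨0, hq0⟩ : Fin q)
      simpa using h
  obtain ⟨v, hvP, hvmax⟩ := Set.exists_max_image P (fun w => ‖w‖) hPfin hPne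
  obtain ⟨i, ε, hε, hεprod, hveq⟩ := hvP
  have hvP' : v ∈ P := ⟨i, ε, hε, hεprod, hveq⟩
  have hvR : v ∈ R := hPR hvP'
  have hvv : 0 < ⟪v, v⟫ := by
    rw [real_inner_self_eq_norm_sq]
    exact pow_pos (norm_pos_iff.mpr (fun h => hRset.2.1 (h ▸ hvR))) 2
  set C : Fin q → V := fun j => ε j • β j with hCdef
  have hCne : ∀ j, C j ≠ 0 := by
    intro j h
    rcases smul_eq_zero.mp h with h' | h'
    · rcases hε j with h2 | h2 <;> rw [h2] at h' <;> norm_num at h'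
    · exact hβ j h'
  have hCC : ∀ j, C j + C j ≠ 0 := by
    intro j h
    apply hCne j
    have h2 : (2:ℝ) • C j = 0 := by rw [two_smul]; exact h
    exact (smul_eq_zero.mp h2).resolve_left (by norm_num)
  set y : Fin q → ℝ := fun j => 4 * ⟪v, C j⟫ / ⟪v, v⟫ with hydef
  -- double flips stay in P
  have hflip : ∀ j k : Fin q, j ≠ k →
      α i + ((∑ l, ε l • β l) - (2:ℝ) • (C j + C k)) ∈ P := by
    intro j k hjk
    have hs1 : ∀ l, Function.update ε j (-(ε j)) l = 1 ∨ Function.update ε j (-(ε j)) l = -1 :=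
      update_signs hε j (neg_sign (hε j))
    have hs2 := update_signs hs1 k (neg_sign (hs1 k))
    have hprod2 : ∏ l, Function.update (Function.update ε j (-(ε j))) k
        (-(Function.update ε j (-(ε j)) k)) l = c := by
      rw [prod_update_neg, prod_update_neg, neg_neg, hεprod]
    have hmem := hPmem i _ hs2 hprod2
    have heq : ∑ l, (Function.update (Function.update ε j (-(ε j))) k
        (-(Function.update ε j (-(ε j)) k)) l) • β l
        = (∑ l, ε l • β l) - (2:ℝ) • (C j + C k) := by
      rw [sum_update_smul, sum_update_smul, Function.update_of_ne (Ne.symm hjk)]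
      show _ = _ - (2:ℝ) • (ε j • β j + ε k • β k)
      module
    rw [heq] at hmem
    exact hmem
  -- pair facts
  have hA1 : ∀ j k, j ≠ k → C j + C k ≠ 0 → 1 ≤ y j + y k := by
    intro j k hjk hne0
    have hw := hflip j k hjk
    have hdiff : v - (α i + ((∑ l, ε l • β l) - (2:ℝ) • (C j + C k)))
        = (2:ℝ) • (C j + C k) := by
      rw [hveq]; abel
    have hne : v ≠ α i + ((∑ l, ε l • β l) - (2:ℝ) • (C j + C k)) := by
      intro h
      apply hne0
      have h0 : (2:ℝ) • (C j + C k) = 0 := by rw [← hdiff, h, sub_self]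
      exact (smul_eq_zero.mp h0).resolve_left (by norm_num)
    have hk2 := (key_lemma hRset hvR (hPR hw)).2 (hvmax _ hw) hne
    rw [hdiff] at hk2
    have he : 2 * ⟪v, (2:ℝ) • (C j + C k)⟫ / ⟪v, v⟫ = y j + y k := by
      rw [real_inner_smul_right, inner_add_right]
      simp only [hydef]
      ring
    linarith [he ▸ hk2]
  have hA2 : ∀ j k : Fin q, C j + C k = 0 → y j + y k = 0 := by
    intro j k h0
    have hk' : C k = -C j := eq_neg_of_add_eq_zero_right h0
    simp only [hydef, hk', inner_neg_right]
    ring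
  -- the t-fact
  obtain ⟨i', hi'⟩ := hα i
  have hwα : -α i + ∑ l, ε l • β l ∈ P := ⟨i', ε, hε, hεprod, by rw [hi']⟩
  have ht1 : α i ≠ 0 → 1 ≤ 4 * ⟪v, α i⟫ / ⟪v, v⟫ := by
    intro hαne
    have hdiff : v - (-α i + ∑ l, ε l • β l) = (2:ℝ) • α i := by rw [hveq]; module
    have hne : v ≠ -α i + ∑ l, ε l • β l := by
      intro h
      apply hαne
      have h0 : (2:ℝ) • α i = 0 := by rw [← hdiff, h, sub_self]
      exact (smul_eq_zero.mp h0).resolve_left (by norm_num)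
    have hk2 := (key_lemma hRset hvR (hPR hwα)).2 (hvmax _ hwα) hne
    rw [hdiff] at hk2
    calc (1:ℝ) ≤ 2 * ⟪v, (2:ℝ) • α i⟫ / ⟪v, v⟫ := hk2
      _ = 4 * ⟪v, α i⟫ / ⟪v, v⟫ := by rw [real_inner_smul_right]; ring
  have ht0 : 0 ≤ 4 * ⟪v, α i⟫ / ⟪v, v⟫ := by
    by_cases hαz : α i = 0
    · simp [hαz]
    · linarith [ht1 hαz]
  -- sum identity
  have hsum : 4 * ⟪v, α i⟫ / ⟪v, v⟫ + ∑ j, y j = 4 := by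
    have e1 : ∑ j, y j = 4 * ⟪v, ∑ j, C j⟫ / ⟪v, v⟫ := by
      rw [inner_sum, Finset.mul_sum, Finset.sum_div]
    have e2 : ⟪v, α i⟫ + ⟪v, ∑ j, C j⟫ = ⟪v, v⟫ := by
      rw [← inner_add_right]
      congr 1
      rw [hveq]
    rw [e1]
    field_simp
    linarith
  have hcardU : (Finset.univ : Finset (Fin q)).card = q := by simp
  have hqR : (9:ℝ) ≤ (q:ℝ) := by exact_mod_cast hq9
  by_cases hN : ∀ a b : Fin q, a ≠ b → C a + C b ≠ 0
  · -- no null pairs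
    have havg := avg_bound Finset.univ y
      (fun a _ b _ hab => hA1 a b hab (hN a b hab)) (by rw [hcardU]; omega)
    rw [hcardU] at havg
    linarith
  · push_neg at hN
    obtain ⟨j₀, k₀, hjk₀, hnull₀⟩ := hN
    have hmeet : ∀ a b : Fin q, a ≠ b → C a + C b = 0 →
        (a = j₀ ∨ a = k₀ ∨ b = j₀ ∨ b = k₀) := by
      intro a b hab h0
      by_contra hno
      push_neg at hno
      obtain ⟨h1, h2, h3, h4⟩ := hno
      exact nullpair_contra C y hCne hA1 hA2 h0 hnull₀ hab hjk₀ h1 h2 h3 h4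
    have hcenter : ∃ ℓ₀ pc : Fin q, ℓ₀ ≠ pc ∧ C ℓ₀ + C pc = 0 ∧
        (∀ a b : Fin q, a ≠ b → a ≠ ℓ₀ → b ≠ ℓ₀ → C a + C b ≠ 0) := by
      by_cases hcj : ∀ a b : Fin q, a ≠ b → a ≠ j₀ → b ≠ j₀ → C a + C b ≠ 0
      · exact ⟨j₀, k₀, hjk₀, hnull₀, hcj⟩
      · push_neg at hcj
        obtain ⟨a, b, hab, haj, hbj, h0⟩ := hcj
        refine ⟨k₀, j₀, Ne.symm hjk₀, by rw [add_comm]; exact hnull₀, ?_⟩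
        intro a' b' ha'b' ha'k hb'k h0'
        -- `(a,b)` is a null pair avoiding `j₀`; `(a',b')` avoids `k₀`.
        have final : ∀ z z' : Fin q, z ≠ j₀ → z ≠ k₀ → z' ≠ j₀ → z' ≠ k₀ →
            C z + C k₀ = 0 → C j₀ + C z' = 0 → False := by
          intro z z' hzj hzk hz'j hz'k hz0 hz'0
          rcases eq_or_ne z z' with hzz | hzz
          · subst hzz
            have e1 : C z = -C k₀ := eq_neg_of_add_eq_zero_left hz0
            have e2 : C z = -C j₀ := eq_neg_of_add_eq_zero_right hz'0
            have : C j₀ = C k₀ := by rw [← neg_neg (C j₀), ← e2, e1, neg_neg]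
            apply hCC j₀
            rw [← this] at hnull₀
            exact hnull₀
          · exact nullpair_contra C y hCne hA1 hA2 hz0 hz'0 hzk (Ne.symm hz'j) hzj hzz
              (Ne.symm hjk₀) (Ne.symm hz'k)
        -- normalize the null pair (a,b) to the form (z, k₀)
        have hzab : ∃ z : Fin q, z ≠ j₀ ∧ z ≠ k₀ ∧ C z + C k₀ = 0 := by
          rcases hmeet a b hab h0 with h | h | h | h
          · exact absurd h haj
          · exact ⟨b, hbj, fun hbk => hab (by rw [h, hbk]), by rw [← h, add_comm]; exact h0⟩
          · exact absurd h hbj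
          · exact ⟨a, haj, fun hak => hab (by rw [h, hak]), by rw [← h]; exact h0⟩
        have hz'ab : ∃ z' : Fin q, z' ≠ j₀ ∧ z' ≠ k₀ ∧ C j₀ + C z' = 0 := by
          rcases hmeet a' b' ha'b' h0' with h | h | h | h
          · exact ⟨b', fun hbj' => ha'b' (by rw [h, hbj']), hb'k, by rw [← h]; exact h0'⟩
          · exact absurd h ha'k
          · exact ⟨a', fun haj' => ha'b' (by rw [h, haj']), ha'k, by rw [← h, add_comm]; exact h0'⟩
          · exact absurd h hb'k
        obtain ⟨z, hzj, hzk, hz0⟩ := hzab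
        obtain ⟨z', hz'j, hz'k, hz'0⟩ := hz'ab
        exact final z z' hzj hzk hz'j hz'k hz0 hz'0
    obtain ⟨ℓ₀, pc, hℓpc, hnullℓ, hcent⟩ := hcenter
    by_cases hK : ∀ j : Fin q, j ≠ ℓ₀ → C ℓ₀ + C j = 0
    · -- all other indices are partners of ℓ₀
      have hcard2 : 1 < (Finset.univ.erase ℓ₀).card := by
        rw [Finset.card_erase_of_mem (Finset.mem_univ _), hcardU]; omega
      obtain ⟨k₁, hk₁, k₂, hk₂, hk12⟩ := Finset.one_lt_card.mp hcard2
      have hk₁ℓ : k₁ ≠ ℓ₀ := Finset.ne_of_mem_erase hk₁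
      have hk₂ℓ : k₂ ≠ ℓ₀ := Finset.ne_of_mem_erase hk₂
      have hCk : ∀ j : Fin q, j ≠ ℓ₀ → C j = -C ℓ₀ :=
        fun j hj => eq_neg_of_add_eq_zero_right (hK j hj)
      have hyj : ∀ j : Fin q, j ≠ ℓ₀ → y j = -y ℓ₀ := by
        intro j hj
        have := hA2 ℓ₀ j (hK j hj)
        linarith
      have hgood : C k₁ + C k₂ ≠ 0 := by
        rw [hCk k₁ hk₁ℓ, hCk k₂ hk₂ℓ, ← neg_add, neg_ne_zero]
        exact hCC ℓ₀
      have h12 : 1 ≤ y k₁ + y k₂ := hA1 k₁ k₂ hk12 hgood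
      have hyℓ : 1/2 ≤ -y ℓ₀ := by
        rw [hyj k₁ hk₁ℓ, hyj k₂ hk₂ℓ] at h12
        linarith
      have hsy : ∑ j, y j = y ℓ₀ + ((q:ℝ) - 1) * (-y ℓ₀) := by
        rw [← Finset.add_sum_erase _ y (Finset.mem_univ ℓ₀)]
        congr 1
        rw [Finset.sum_congr rfl (fun j hj => hyj j (Finset.ne_of_mem_erase hj)),
          Finset.sum_const, Finset.card_erase_of_mem (Finset.mem_univ _), hcardU,
          nsmul_eq_mul, Nat.cast_sub (by omega : 1 ≤ q)]
        push_cast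
        ring
      by_cases hαz : α i = 0
      · -- proportionality contradiction
        have hCsum : ∑ l, ε l • β l = ((1:ℝ) - ((q:ℝ) - 1)) • C ℓ₀ := by
          show ∑ l, C l = _
          rw [← Finset.add_sum_erase _ C (Finset.mem_univ ℓ₀),
            Finset.sum_congr rfl (fun j hj => hCk j (Finset.ne_of_mem_erase hj)),
            Finset.sum_const, Finset.card_erase_of_mem (Finset.mem_univ _), hcardU,
            ← Nat.cast_smul_eq_nsmul ℝ, Nat.cast_sub (by omega : 1 ≤ q)]
          push_cast
          module
        have hv1 : v = ((1:ℝ) - ((q:ℝ) - 1)) • C ℓ₀ := by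
          rw [hveq, hαz, zero_add, hCsum]
        have hw := hflip k₁ k₂ hk12
        have hw2 : α i + ((∑ l, ε l • β l) - (2:ℝ) • (C k₁ + C k₂))
            = (((1:ℝ) - ((q:ℝ) - 1)) + 4) • C ℓ₀ := by
          rw [hαz, zero_add, hCsum, hCk k₁ hk₁ℓ, hCk k₂ hk₂ℓ]
          module
        refine prop_contra hRset (hv1 ▸ hvR) (hw2 ▸ hPR hw) ?_ ?_ ?_
        · intro h; rw [sub_eq_zero] at h; nlinarith
        · intro h; nlinarith
        · intro h; nlinarith
      · have ht := ht1 hαz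
        have key2 : ∑ j, y j = ((q:ℝ) - 2) * (-y ℓ₀) := by rw [hsy]; ring
        have hmul : ((q:ℝ) - 2) * (1/2) ≤ ((q:ℝ) - 2) * (-y ℓ₀) :=
          mul_le_mul_of_nonneg_left hyℓ (by linarith)
        linarith [hsum, key2]
    · -- some non-partner j₁ exists
      push_neg at hK
      obtain ⟨j₁, hj₁ℓ, hj₁⟩ := hK
      have h1 : 1 ≤ y ℓ₀ + y j₁ := hA1 ℓ₀ j₁ (Ne.symm hj₁ℓ) hj₁
      have hj₁mem : j₁ ∈ Finset.univ.erase ℓ₀ :=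
        Finset.mem_erase.mpr ⟨hj₁ℓ, Finset.mem_univ _⟩
      have hcardT' : ((Finset.univ.erase ℓ₀).erase j₁).card = q - 2 := by
        rw [Finset.card_erase_of_mem hj₁mem,
          Finset.card_erase_of_mem (Finset.mem_univ _), hcardU]
        omega
      have havg := avg_bound ((Finset.univ.erase ℓ₀).erase j₁) y
        (fun a ha b hb hab => hA1 a b hab
          (hcent a b hab (Finset.ne_of_mem_erase (Finset.mem_of_mem_erase ha))
            (Finset.ne_of_mem_erase (Finset.mem_of_mem_erase hb))))
        (by rw [hcardT']; omega)
      rw [hcardT', Nat.cast_sub (by omega : 2 ≤ q)] at havg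
      have hdecomp : ∑ j, y j = y ℓ₀ + (y j₁ + ∑ j ∈ (Finset.univ.erase ℓ₀).erase j₁, y j) := by
        rw [← Finset.add_sum_erase _ y (Finset.mem_univ ℓ₀), ← Finset.add_sum_erase _ y hj₁mem]
      push_cast at havg
      linarith


/-- Combinatorial bounds on the weight systems of the isotropy representation of a
compact homogeneous space of equal rank with a rank `r` even Clifford structure: for a
nonempty admissible subsystem of roots `W` of type I (`A + {∑ εⱼβⱼ}`, `A = -A`) one has
`q ≤ 4`; of type II (`{(∏εⱼ)αᵢ + ∑ εⱼβⱼ}`, `q` odd) one has `q ≤ 7`; of types III–IV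
(`A + {∑ εⱼβⱼ : ∏ εⱼ = ±1}`, `q` even) one has `q ≤ 8`. Consequently `r = 2q+1 ≤ 9` for
`r` odd, `r = 2q ≤ 14` for `r ≡ 2 (mod 4)`, `r = 2q ≤ 12` for `r ≡ 4 (mod 8)`, and
`r = 2q ≤ 16` for `r ≡ 0 (mod 8)`. -/
theorem stmt_19 :
    -- type I
    (∀ (p q : ℕ), 0 < p → ∀ (α : Fin p → V) (β : Fin q → V), (∀ j, β j ≠ 0) →
      (∀ i, ∃ i', α i' = -α i) →
      IsAdmissible {v : V | ∃ (i : Fin p) (ε : Fin q → ℝ),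
        (∀ j, ε j = 1 ∨ ε j = -1) ∧ v = α i + ∑ j, ε j • β j} →
      q ≤ 4) ∧
    -- type II
    (∀ (p q : ℕ), 0 < p → Odd q → ∀ (α : Fin p → V) (β : Fin q → V), (∀ j, β j ≠ 0) →
      IsAdmissible {v : V | ∃ (i : Fin p) (ε : Fin q → ℝ),
        (∀ j, ε j = 1 ∨ ε j = -1) ∧ v = (∏ j, ε j) • α i + ∑ j, ε j • β j} →
      q ≤ 7) ∧
    -- types III--IV
    (∀ (c : ℝ), (c = 1 ∨ c = -1) → ∀ (p q : ℕ), 0 < p → Even q →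
      ∀ (α : Fin p → V) (β : Fin q → V), (∀ j, β j ≠ 0) → (∀ i, ∃ i', α i' = -α i) →
      IsAdmissible {v : V | ∃ (i : Fin p) (ε : Fin q → ℝ),
        (∀ j, ε j = 1 ∨ ε j = -1) ∧ (∏ j, ε j) = c ∧ v = α i + ∑ j, ε j • β j} →
      q ≤ 8) ∧
    -- consequences for the rank r
    (∀ r q : ℕ, r = 2 * q + 1 → q ≤ 4 → r ≤ 9) ∧
    (∀ r q : ℕ, r = 2 * q → r % 4 = 2 → q ≤ 7 → r ≤ 14) ∧
    (∀ r q : ℕ, r = 2 * q → r % 8 = 4 → q ≤ 8 → r ≤ 12) ∧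
    (∀ r q : ℕ, r = 2 * q → r % 8 = 0 → q ≤ 8 → r ≤ 16) := by
  refine ⟨?_, ?_, ?_, ?_, ?_, ?_, ?_⟩
  · exact fun p q hp α β hβ hα hadm => typeI_bound p q hp α β hβ hα hadm
  · exact fun p q hp hq α β hβ hadm => typeII_bound p q hp hq α β hβ hadm
  · exact fun c hc p q hp hq α β hβ hα hadm => typeIII_bound c hc p q hp hq α β hβ hα hadm
  · intro r q h1 h2; omega
  · intro r q h1 h2 h3; omega
  · intro r q h1 h2 h3; omega
  · intro r q h1 h2 h3; omega
end
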